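/- Root count for the Bryan/Lindblom–Ipser eigenvalue equation: define the Legendre polynomial by Rodrigues' formula P_l(x) = (1/(2^l l!)) · (d/dx)^l (x² − 1)^l and the associated Legendre function by P_l^m(x) = (1 − x²)^{m/2} · (d/dx)^m P_l(x) for x ∈ (−1,1). Let m ≥ 1 and l₀ ≥ m be integers and define f : (−2, 2) → ℝ by f(κ) = (4 − κ²) · (d/dκ)[P_{l₀+1}^m(κ/2)] − 2m · P_{l₀+1}^m(κ/2). Then f has exactly l₀ − m + 1 distinct zeros in the interval (−2, 2). (These zeros are the lowest-order dimensionless rotating-frame eigenfrequencies κ₀ of the hybrid modes of a slowly and uniformly rotating uniform-density star, so for given m > 0 and terminating index l₀ there are exactly l₀ − m + 1 such modes.) -/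

import Mathlib

noncomputable section

/-- The Legendre polynomial, via Rodrigues' formula
`P_l(x) = (1/(2^l l!)) (d/dx)^l (x² − 1)^l`. -/
def legendreP (l : ℕ) (x : ℝ) : ℝ :=
  (1 / (2 ^ l * (Nat.factorial l : ℝ))) *
    iteratedDeriv l (fun t : ℝ => (t ^ 2 - 1) ^ l) x

/-- The associated Legendre function
`P_l^m(x) = (1 − x²)^{m/2} (d/dx)^m P_l(x)` for `x ∈ (−1,1)`. -/
def assocLegendreP (l m : ℕ) (x : ℝ) : ℝ :=
  (1 - x ^ 2) ^ ((m : ℝ) / 2) * iteratedDeriv m (legendreP l) x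

namespace BryanAux

open Polynomial

theorem iteratedDeriv_polyEval (p : Polynomial ℝ) (k : ℕ) :
    iteratedDeriv k (fun x => p.eval x) = fun x => (derivative^[k] p).eval x := by
  induction k with
  | zero => funext x; simp
  | succ n ih =>
    funext x
    rw [iteratedDeriv_succ]
    rw [ih]
    rw [Function.iterate_succ_apply']
    exact ((derivative^[n] p).hasDerivAt x).deriv

theorem iter_deriv_facts (p : Polynomial ℝ) (hp : p ≠ 0) :
    ∀ k, k ≤ p.natDegree → derivative^[k] p ≠ 0 ∧
      (derivative^[k] p).natDegree = p.natDegree - k := by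
  intro k
  induction k with
  | zero => simp [hp]
  | succ n ih =>
    intro hn
    obtain ⟨h1, h2⟩ := ih (Nat.le_of_succ_le hn)
    have hpos : 0 < (derivative^[n] p).natDegree := by omega
    have hd := Polynomial.degree_derivative_eq _ hpos
    rw [Function.iterate_succ_apply']
    constructor
    · intro h0
      rw [h0, Polynomial.degree_zero] at hd
      exact absurd hd.symm (by simp)
    · have := Polynomial.natDegree_eq_of_degree_eq_some hd
      omega

theorem rolle_list (p : Polynomial ℝ) :
    ∀ ls : List ℝ, ls.Chain' (· < ·) → (∀ x ∈ ls, p.eval x = 0) →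
    ∃ ms : List ℝ, ms.length = ls.length - 1 ∧ ms.Chain' (· < ·) ∧
      (∀ y ∈ ms, p.derivative.eval y = 0) ∧
      (∀ y ∈ ms, ∃ a ∈ ls, ∃ b ∈ ls, a < y ∧ y < b) := by
  intro ls
  induction ls with
  | nil => exact fun _ _ => ⟨[], by simp, List.isChain_nil, by simp, by simp⟩
  | cons x t ih =>
    intro hc hz
    cases t with
    | nil => exact ⟨[], by simp, List.isChain_nil, by simp, by simp⟩
    | cons y t' =>
      have hxy : x < y := (List.isChain_cons_cons.mp hc).1
      have hc' : (y :: t').Chain' (· < ·) := (List.isChain_cons_cons.mp hc).2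
      obtain ⟨ms', hlen, hch, hz', hloc⟩ := ih hc'
        (fun a ha => hz a (List.mem_cons_of_mem _ ha))
      obtain ⟨c, hcmem, hcz⟩ := exists_deriv_eq_zero hxy
        (p.continuous.continuousOn)
        (by rw [hz x (by simp), hz y (by simp)])
      rw [(p.hasDerivAt c).deriv] at hcz
      have hymin : ∀ a ∈ y :: t', y ≤ a := by
        intro a ha
        rcases List.mem_cons.mp ha with h | h
        · exact le_of_eq h.symm
        · exact le_of_lt (List.rel_of_pairwise_cons
            (List.isChain_iff_pairwise.mp hc') h)
      refine ⟨c :: ms', by simp [hlen], ?_, ?_, ?_⟩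
      · refine List.IsChain.cons hch ?_
        intro z hzh
        have hzm : z ∈ ms' := List.mem_of_mem_head? hzh
        obtain ⟨a, ha, b, hb, haz, hzb⟩ := hloc z hzm
        exact lt_of_lt_of_le hcmem.2 (le_trans (hymin a ha) haz.le)
      · intro z hzm
        rcases List.mem_cons.mp hzm with h | h
        · rw [h]; exact hcz
        · exact hz' z h
      · intro z hzm
        rcases List.mem_cons.mp hzm with h | h
        · exact ⟨x, by simp, y, by simp, h ▸ hcmem.1, h ▸ hcmem.2⟩
        · obtain ⟨a, ha, b, hb, h1, h2⟩ := hloc z h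
          exact ⟨a, List.mem_cons_of_mem _ ha, b, List.mem_cons_of_mem _ hb, h1, h2⟩

theorem factor_iter_deriv (l : ℕ) :
    ∀ k, k ≤ l → ∃ g : Polynomial ℝ,
      derivative^[k] (((X : Polynomial ℝ)^2 - 1)^l)
        = ((X : Polynomial ℝ)^2 - 1)^(l-k) * g := by
  intro k
  induction k with
  | zero => exact fun _ => ⟨1, by simp⟩
  | succ n ih =>
    intro hn
    obtain ⟨g, hg⟩ := ih (Nat.le_of_succ_le hn)
    refine ⟨C ((l : ℝ) - n) * derivative ((X : Polynomial ℝ)^2 - 1) * g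
      + ((X : Polynomial ℝ)^2 - 1) * derivative g, ?_⟩
    rw [Function.iterate_succ_apply', hg, derivative_mul, derivative_pow]
    have he : l - n = (l - (n+1)) + 1 := by omega
    rw [he, pow_succ]
    have hc : ((l - (n+1) + 1 : ℕ) : ℝ) = (l : ℝ) - n := by
      have h2 : ((l - (n+1) + 1 : ℕ) : ℝ) = ((l - n : ℕ) : ℝ) := by norm_cast; omega
      rw [h2, Nat.cast_sub (Nat.le_of_succ_le hn)]
    rw [hc]
    simp only [Nat.add_sub_cancel]
    ring

theorem endpoint_zero (l k : ℕ) (hk : k < l) (x : ℝ) (hx : x^2 = 1) :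
    (derivative^[k] (((X : Polynomial ℝ)^2 - 1)^l)).eval x = 0 := by
  obtain ⟨g, hg⟩ := factor_iter_deriv l k hk.le
  rw [hg, eval_mul, eval_pow, eval_sub, eval_pow, eval_one, eval_X, hx,
    sub_self, zero_pow (by omega), zero_mul]

theorem phase1 (l : ℕ) : ∀ k, k ≤ l →
    ∃ ls : List ℝ, ls.length = k ∧ ls.Chain' (· < ·) ∧
      ∀ x ∈ ls, x ∈ Set.Ioo (-1 : ℝ) 1 ∧
        (derivative^[k] (((X : Polynomial ℝ)^2 - 1)^l)).eval x = 0 := by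
  intro k
  induction k with
  | zero => exact fun _ => ⟨[], by simp, List.isChain_nil, by simp⟩
  | succ n ih =>
    intro hn
    obtain ⟨ls, hlen, hch, hmem⟩ := ih (Nat.le_of_succ_le hn)
    set ls' : List ℝ := -1 :: (ls ++ [1]) with hls'
    have hch' : ls'.Chain' (· < ·) := by
      refine List.isChain_iff_pairwise.mpr ?_
      refine List.pairwise_cons.mpr ⟨?_, List.pairwise_append.mpr
        ⟨List.isChain_iff_pairwise.mp hch, by simp, ?_⟩⟩
      · intro b hb
        rcases List.mem_append.mp hb with h | h
        · exact (hmem b h).1.1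
        · simp at h; rw [h]; norm_num
      · intro a ha b hb
        simp at hb; rw [hb]
        exact (hmem a ha).1.2
    have hz' : ∀ x ∈ ls', (derivative^[n] (((X : Polynomial ℝ)^2 - 1)^l)).eval x = 0 := by
      intro x hx
      rcases List.mem_cons.mp hx with h | h
      · rw [h]; exact endpoint_zero l n hn (-1) (by norm_num)
      · rcases List.mem_append.mp h with h2 | h2
        · exact (hmem x h2).2
        · simp at h2; rw [h2]; exact endpoint_zero l n hn 1 (by norm_num)
    obtain ⟨ms, hmlen, hmch, hmz, hmloc⟩ := rolle_list _ ls' hch' hz'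
    refine ⟨ms, by simp [hls', hlen] at hmlen ⊢; omega, hmch, ?_⟩
    intro y hy
    obtain ⟨a, ha, b, hb, hay, hyb⟩ := hmloc y hy
    have hrange : ∀ c ∈ ls', -1 ≤ c ∧ c ≤ 1 := by
      intro c hc
      rcases List.mem_cons.mp hc with h | h
      · rw [h]; norm_num
      · rcases List.mem_append.mp h with h2 | h2
        · exact ⟨(hmem c h2).1.1.le, (hmem c h2).1.2.le⟩
        · simp at h2; rw [h2]; norm_num
    refine ⟨⟨lt_of_le_of_lt (hrange a ha).1 hay, lt_of_lt_of_le hyb (hrange b hb).2⟩, ?_⟩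
    rw [Function.iterate_succ_apply']
    exact hmz y hy

theorem phase2 (l m : ℕ) (hml : m < l) :
    ∃ ls : List ℝ, ls.length = l - m ∧ ls.Chain' (· < ·) ∧
      ∀ x ∈ ls, x ∈ Set.Ioo (-1 : ℝ) 1 ∧
        (derivative^[l + m] (((X : Polynomial ℝ)^2 - 1)^l)).eval x = 0 := by
  induction m with
  | zero => simpa using phase1 l l le_rfl
  | succ n ih =>
    obtain ⟨ls, hlen, hch, hmem⟩ := ih (Nat.lt_of_succ_lt hml)
    obtain ⟨ms, hmlen, hmch, hmz, hmloc⟩ := rolle_list _ ls hch (fun x hx => (hmem x hx).2)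
    refine ⟨ms, by omega, hmch, ?_⟩
    intro y hy
    obtain ⟨a, ha, b, hb, hay, hyb⟩ := hmloc y hy
    refine ⟨⟨lt_trans (hmem a ha).1.1 hay, lt_trans hyb (hmem b hb).1.2⟩, ?_⟩
    have : l + (n + 1) = (l + n) + 1 := by omega
    rw [this, Function.iterate_succ_apply']
    exact hmz y hy

theorem Q_facts (l : ℕ) : (((X : Polynomial ℝ)^2 - 1)^l) ≠ 0 ∧
    (((X : Polynomial ℝ)^2 - 1)^l).natDegree = 2 * l := by
  have h2 : ((X : Polynomial ℝ)^2 - 1).natDegree = 2 := by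
    have : ((X : Polynomial ℝ)^2 - 1) = X^2 - C 1 := by simp
    rw [this, natDegree_X_pow_sub_C]
  have hne : ((X : Polynomial ℝ)^2 - 1) ≠ 0 := fun h => by simp [h] at h2
  exact ⟨pow_ne_zero _ hne, by rw [natDegree_pow, h2]; ring⟩

theorem v_facts (l m : ℕ) (hml : m < l) :
    derivative^[l + m] (((X : Polynomial ℝ)^2 - 1)^l) ≠ 0 ∧
    (derivative^[l + m] (((X : Polynomial ℝ)^2 - 1)^l)).natDegree = l - m := by
  obtain ⟨hQ, hdeg⟩ := Q_facts l
  have := iter_deriv_facts _ hQ (l + m) (by omega)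
  rw [hdeg] at this
  exact ⟨this.1, by omega⟩

theorem R_facts (l m : ℕ) (hm : 1 ≤ m) (hml : m < l)
    (v : Polynomial ℝ) (hv : v ≠ 0) (hvd : v.natDegree = l - m) :
    ((1 - X) * derivative v - C (m : ℝ) * v) ≠ 0 ∧
    ((1 - X) * derivative v - C (m : ℝ) * v).natDegree = l - m := by
  set R : Polynomial ℝ := (1 - X) * derivative v - C (m : ℝ) * v with hR
  set d : ℕ := l - m with hd
  have hd1 : 1 ≤ d := by omega
  have hcoeff : R.coeff d = -(l : ℝ) * v.coeff d := by
    have h1 : ((1 - X) * derivative v) = derivative v - X * derivative v := by ring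
    have e : d - 1 + 1 = d := by omega
    have hXc : (X * derivative v).coeff d = (derivative v).coeff (d - 1) := by
      conv_lhs => rw [← e]
      rw [coeff_X_mul]
    have hvd1 : (derivative v).coeff d = 0 := by
      rw [coeff_derivative]
      rw [coeff_eq_zero_of_natDegree_lt (by omega)]
      ring
    have hvd2 : (derivative v).coeff (d - 1) = v.coeff d * d := by
      rw [coeff_derivative]
      congr 1
      · rw [e]
      · norm_cast
    rw [hR, coeff_sub, h1, coeff_sub, hXc, hvd1, hvd2, coeff_C_mul]
    have hlm : ((d : ℝ) + m) = l := by
      rw [hd]; push_cast [Nat.cast_sub hml.le]; ring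
    rw [← hlm]
    ring
  have hcd : v.coeff d ≠ 0 := by
    rw [← hvd]
    exact leadingCoeff_ne_zero.mpr hv
  have hl0 : (l : ℝ) ≠ 0 := by
    have h0 : 0 < l := by omega
    exact_mod_cast h0.ne'
  have hRcoeff : R.coeff d ≠ 0 := by
    rw [hcoeff]
    exact mul_ne_zero (neg_ne_zero.mpr hl0) hcd
  have hRne : R ≠ 0 := fun h => by simp [h] at hRcoeff
  have hle : R.natDegree ≤ d := by
    refine le_trans (natDegree_sub_le _ _) (max_le ?_ ?_)
    · refine le_trans (natDegree_mul_le) ?_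
      have h1X : (1 - X : Polynomial ℝ).natDegree ≤ 1 := by
        refine le_trans (natDegree_sub_le _ _) ?_
        simp
      have hdv : (derivative v).natDegree ≤ d - 1 := by
        have := natDegree_derivative_le v
        omega
      omega
    · refine le_trans (natDegree_mul_le) ?_
      simp [hvd]
  exact ⟨hRne, le_antisymm hle (le_natDegree_of_ne_zero hRcoeff)⟩

theorem deriv_Fp (m : ℕ) (hm : 1 ≤ m) (v : Polynomial ℝ) :
    derivative ((1 - X)^m * v)
      = (1 - X)^(m-1) * ((1 - X) * derivative v - C (m : ℝ) * v) := by
  have hone : derivative (1 - X : Polynomial ℝ) = -1 := by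
    simp
  have hms : m = (m - 1) + 1 := by omega
  have hpow : (1 - X : Polynomial ℝ)^m = (1 - X)^(m-1) * (1 - X) := by
    conv_lhs => rw [hms]
    rw [pow_succ]
  rw [derivative_mul, derivative_pow, hone, hpow]
  ring

theorem count_roots_interval (R : Polynomial ℝ) (hR : R ≠ 0) (n : ℕ)
    (hdeg : R.natDegree = n) (ms : List ℝ) (hlen : ms.length = n)
    (hch : ms.Chain' (· < ·))
    (hmem : ∀ y ∈ ms, y ∈ Set.Ioo (-1 : ℝ) 1 ∧ R.eval y = 0) :
    {x ∈ Set.Ioo (-1 : ℝ) 1 | R.eval x = 0}.ncard = n := by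
  have hnd : ms.Nodup := (List.isChain_iff_pairwise.mp hch).imp (fun h => ne_of_lt h)
  have hcard : ms.toFinset.card = n := by
    rw [List.toFinset_card_of_nodup hnd, hlen]
  have hsub : ms.toFinset ⊆ R.roots.toFinset := by
    intro x hx
    rw [List.mem_toFinset] at hx
    rw [Multiset.mem_toFinset, mem_roots hR]
    exact (hmem x hx).2
  have hle : R.roots.toFinset.card ≤ n := by
    calc R.roots.toFinset.card ≤ Multiset.card R.roots := R.roots.toFinset_card_le
    _ ≤ R.natDegree := R.card_roots'
    _ = n := hdeg
  have heq : ms.toFinset = R.roots.toFinset :=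
    Finset.eq_of_subset_of_card_le hsub (by omega)
  have hset : {x ∈ Set.Ioo (-1 : ℝ) 1 | R.eval x = 0} = ↑ms.toFinset := by
    ext x
    simp only [Set.mem_setOf_eq, Finset.coe_sort_coe, Finset.mem_coe, List.mem_toFinset]
    constructor
    · rintro ⟨hx, hz⟩
      have : x ∈ R.roots.toFinset := by
        rw [Multiset.mem_toFinset, mem_roots hR]; exact hz
      rw [← heq, List.mem_toFinset] at this
      exact this
    · intro hx
      exact ⟨(hmem x hx).1, (hmem x hx).2⟩
  rw [hset, Set.ncard_coe_finset, hcard]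

theorem assoc_eq (l m : ℕ) (x : ℝ) :
    assocLegendreP l m x = (1 - x ^ 2) ^ ((m : ℝ) / 2) *
      ((1 / (2 ^ l * (Nat.factorial l : ℝ))) *
        (derivative^[l + m] (((X : Polynomial ℝ)^2 - 1)^l)).eval x) := by
  set c : ℝ := 1 / (2 ^ l * (Nat.factorial l : ℝ)) with hc
  set Q : Polynomial ℝ := ((X : Polynomial ℝ)^2 - 1)^l with hQ
  have hfun : (fun t : ℝ => (t ^ 2 - 1) ^ l) = fun t => Q.eval t := by
    funext t; simp [hQ]
  have hleg : legendreP l = fun y => (C c * derivative^[l] Q).eval y := by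
    funext y
    rw [legendreP, hfun, iteratedDeriv_polyEval]
    rw [eval_mul, eval_C, hc]
  rw [assocLegendreP, hleg, iteratedDeriv_polyEval]
  congr 1
  simp only [iterate_derivative_C_mul, eval_mul, eval_C]
  congr 2
  rw [add_comm l m, Function.iterate_add_apply]

theorem key_hasDerivAt (l m : ℕ) (κ : ℝ) (hκ : κ ∈ Set.Ioo (-2 : ℝ) 2) :
    HasDerivAt (fun t : ℝ => assocLegendreP l m (t / 2))
      (((-(2 * (κ/2)) * ((m : ℝ)/2) * (1 - (κ/2)^2) ^ ((m : ℝ)/2 - 1)) *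
          ((1 / (2 ^ l * (Nat.factorial l : ℝ))) *
            (derivative^[l + m] (((X : Polynomial ℝ)^2 - 1)^l)).eval (κ/2))
        + (1 - (κ/2)^2) ^ ((m : ℝ)/2) *
          ((1 / (2 ^ l * (Nat.factorial l : ℝ))) *
            (derivative (derivative^[l + m] (((X : Polynomial ℝ)^2 - 1)^l))).eval (κ/2)))
        * (1/2)) κ := by
  set c : ℝ := 1 / (2 ^ l * (Nat.factorial l : ℝ)) with hc
  set v : Polynomial ℝ := derivative^[l + m] (((X : Polynomial ℝ)^2 - 1)^l) with hv
  set x : ℝ := κ / 2 with hx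
  have hne : (1 : ℝ) - x ^ 2 ≠ 0 := by
    have h1 : -1 < x := by rw [hx]; simp at hκ ⊢; linarith [hκ.1]
    have h2 : x < 1 := by rw [hx]; simp at hκ ⊢; linarith [hκ.2]
    nlinarith
  have H1 : HasDerivAt (fun y : ℝ => 1 - y ^ 2) (-(2 * x)) x := by
    have := (hasDerivAt_pow 2 x).const_sub 1
    simpa using this
  have H2 : HasDerivAt (fun y : ℝ => (1 - y ^ 2) ^ ((m : ℝ)/2))
      (-(2 * x) * ((m : ℝ)/2) * (1 - x ^ 2) ^ ((m : ℝ)/2 - 1)) x :=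
    H1.rpow_const (Or.inl hne)
  have H3 : HasDerivAt (fun y : ℝ => c * v.eval y) (c * (derivative v).eval x) x :=
    (v.hasDerivAt x).const_mul c
  have H4 := H2.mul H3
  have H5 : HasDerivAt (fun t : ℝ => t / 2) (1/2) κ := (hasDerivAt_id κ).div_const 2
  have H6 := H4.comp κ H5
  have hfun : (fun t : ℝ => assocLegendreP l m (t / 2))
      = (fun y : ℝ => (1 - y ^ 2) ^ ((m : ℝ)/2) * (c * v.eval y)) ∘ (fun t : ℝ => t / 2) := by
    funext t
    exact assoc_eq l m (t / 2)
  rw [hfun]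
  exact H6

theorem f_eq (l m : ℕ) (hm : 1 ≤ m) (κ : ℝ) (hκ : κ ∈ Set.Ioo (-2 : ℝ) 2) :
    (4 - κ ^ 2) * deriv (fun t : ℝ => assocLegendreP l m (t / 2)) κ
      - 2 * (m : ℝ) * assocLegendreP l m (κ / 2)
    = (2 * (1 / (2 ^ l * (Nat.factorial l : ℝ))) * (1 - (κ/2) ^ 2) ^ ((m : ℝ)/2)
        * (1 + κ/2)) *
      ((1 - X) * derivative (derivative^[l + m] (((X : Polynomial ℝ)^2 - 1)^l))
        - C (m : ℝ) * derivative^[l + m] (((X : Polynomial ℝ)^2 - 1)^l)).eval (κ/2) := by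
  rw [(key_hasDerivAt l m κ hκ).deriv, assoc_eq l m (κ/2)]
  have hpos : (0 : ℝ) < 1 - (κ/2) ^ 2 := by
    simp only [Set.mem_Ioo] at hκ
    nlinarith [hκ.1, hκ.2]
  have hrel : (1 - (κ/2)^2) * (1 - (κ/2)^2) ^ ((m : ℝ)/2 - 1)
      = (1 - (κ/2)^2) ^ ((m : ℝ)/2) := by
    nth_rewrite 1 [← Real.rpow_one (1 - (κ/2)^2)]
    rw [← Real.rpow_add hpos]
    norm_num
  rw [eval_sub, eval_mul, eval_mul, eval_sub, eval_one, eval_X, eval_C]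
  linear_combination (-(2:ℝ) * (m : ℝ) * (κ/2) * (1 / (2 ^ l * (Nat.factorial l : ℝ)))
    * (derivative^[l + m] (((X : Polynomial ℝ)^2 - 1)^l)).eval (κ/2)) * hrel

end BryanAux

/-- Root count for the Bryan/Lindblom–Ipser eigenvalue equation: for integers
`m ≥ 1` and `l₀ ≥ m`, the function
`f(κ) = (4 − κ²) (d/dκ)[P_{l₀+1}^m(κ/2)] − 2m P_{l₀+1}^m(κ/2)`
has exactly `l₀ − m + 1` distinct zeros in the interval `(−2, 2)`.  These
zeros are the lowest-order dimensionless rotating-frame eigenfrequencies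
`κ₀` of the hybrid modes of a slowly and uniformly rotating uniform-density
star. -/
theorem bryan_lindblom_ipser_root_count (m l₀ : ℕ) (hm : 1 ≤ m)
    (hl₀ : m ≤ l₀) (f : ℝ → ℝ)
    (hf : ∀ κ ∈ Set.Ioo (-2 : ℝ) 2,
      f κ = (4 - κ ^ 2) * deriv (fun t : ℝ => assocLegendreP (l₀ + 1) m (t / 2)) κ
        - 2 * (m : ℝ) * assocLegendreP (l₀ + 1) m (κ / 2)) :
    {κ ∈ Set.Ioo (-2 : ℝ) 2 | f κ = 0}.ncard = l₀ - m + 1 := by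
  classical
  open Polynomial BryanAux in
  set l : ℕ := l₀ + 1 with hl
  have hml : m < l := by omega
  set v : Polynomial ℝ := derivative^[l + m] (((X : Polynomial ℝ)^2 - 1)^l) with hv
  set R : Polynomial ℝ := (1 - X) * derivative v - C (m : ℝ) * v with hR
  obtain ⟨hvne, hvdeg⟩ := v_facts l m hml
  obtain ⟨hRne, hRdeg⟩ := R_facts l m hm hml v hvne hvdeg
  obtain ⟨ls, hlen, hch, hmem⟩ := phase2 l m hml
  -- extend list with right endpoint 1 and apply Rolle to (1-X)^m * v
  have hchain1 : (ls ++ [1]).Chain' (· < ·) := by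
    refine List.isChain_iff_pairwise.mpr ?_
    refine List.pairwise_append.mpr ⟨List.isChain_iff_pairwise.mp hch, by simp, ?_⟩
    intro a ha b hb
    simp at hb; rw [hb]
    exact (hmem a ha).1.2
  have hFz : ∀ x ∈ ls ++ [1], (((1 - X)^m * v : Polynomial ℝ)).eval x = 0 := by
    intro x hx
    rcases List.mem_append.mp hx with h | h
    · rw [eval_mul, (hmem x h).2, mul_zero]
    · simp at h
      rw [h, eval_mul, eval_pow, eval_sub, eval_one, eval_X, sub_self,
        zero_pow (by omega), zero_mul]
  obtain ⟨ms, hmlen, hmch, hmz, hmloc⟩ := rolle_list _ _ hchain1 hFz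
  have hmslen : ms.length = l - m := by
    simp [hlen] at hmlen
    omega
  have hmsmem : ∀ y ∈ ms, y ∈ Set.Ioo (-1 : ℝ) 1 ∧ R.eval y = 0 := by
    intro y hy
    obtain ⟨a, ha, b, hb, hay, hyb⟩ := hmloc y hy
    have hrange : ∀ c ∈ ls ++ [1], -1 < c ∧ c ≤ 1 := by
      intro c hc
      rcases List.mem_append.mp hc with h | h
      · exact ⟨(hmem c h).1.1, (hmem c h).1.2.le⟩
      · simp at h; rw [h]; norm_num
    have hyI : y ∈ Set.Ioo (-1 : ℝ) 1 :=
      ⟨lt_trans (hrange a ha).1 hay, lt_of_lt_of_le hyb (hrange b hb).2⟩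
    refine ⟨hyI, ?_⟩
    have hz := hmz y hy
    rw [deriv_Fp m hm v, eval_mul, eval_pow, eval_sub, eval_one, eval_X] at hz
    have h1y : (1 - y) ^ (m - 1) ≠ 0 := pow_ne_zero _ (by
      have := hyI.2
      intro h; nlinarith [sub_eq_zero.mp h])
    exact (mul_eq_zero.mp hz).resolve_left h1y
  have hcount := count_roots_interval R hRne (l - m) hRdeg ms hmslen hmch hmsmem
  -- the zero set of f is the image of the zero set of R under doubling
  have hAS : {κ ∈ Set.Ioo (-2 : ℝ) 2 | f κ = 0}
      = (fun x : ℝ => 2 * x) '' {x ∈ Set.Ioo (-1 : ℝ) 1 | R.eval x = 0} := by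
    ext κ
    simp only [Set.mem_setOf_eq, Set.mem_image, Set.mem_Ioo]
    constructor
    · rintro ⟨hκI, hfz⟩
      have hκI' : κ ∈ Set.Ioo (-2 : ℝ) 2 := ⟨hκI.1, hκI.2⟩
      have hfe := f_eq l m hm κ hκI'
      rw [← hf κ hκI', hfz] at hfe
      have hpos : (0 : ℝ) < 1 - (κ/2) ^ 2 := by nlinarith [hκI.1, hκI.2]
      have hfac : (2 * (1 / (2 ^ l * (Nat.factorial l : ℝ))) *
          (1 - (κ/2) ^ 2) ^ ((m : ℝ)/2) * (1 + κ/2)) ≠ 0 := by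
        have h1 : (0:ℝ) < 2 ^ l * (Nat.factorial l : ℝ) := by
          positivity
        have h2 : (0:ℝ) < (1 - (κ/2) ^ 2) ^ ((m : ℝ)/2) := Real.rpow_pos_of_pos hpos _
        have h3 : (0:ℝ) < 1 + κ/2 := by linarith [hκI.1]
        positivity
      have hRz : R.eval (κ/2) = 0 := by
        rcases mul_eq_zero.mp hfe.symm with h | h
        · exact absurd h hfac
        · exact h
      exact ⟨κ/2, ⟨⟨by linarith [hκI.1], by linarith [hκI.2]⟩, hRz⟩, by ring⟩
    · rintro ⟨x, ⟨⟨hx1, hx2⟩, hxz⟩, rfl⟩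
      have hκI : (2 * x) ∈ Set.Ioo (-2 : ℝ) 2 := ⟨by linarith, by linarith⟩
      refine ⟨⟨hκI.1, hκI.2⟩, ?_⟩
      rw [hf _ hκI, f_eq l m hm _ hκI]
      have hxx : (2 * x) / 2 = x := by ring
      rw [hxx, hxz, mul_zero]
  rw [hAS, Set.ncard_image_of_injective _ (fun a b h => by
    simpa using mul_left_cancel₀ (two_ne_zero) h), hcount]
  omega
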